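/- If γ₁,…,γ_d ∈ M_r(ℂ) with r > 0 form any (not necessarily irreducible) representation of the Clifford relations, then for all Hermitian A₁,…,A_d and λ ∈ ℝ^d, the smallest singular value of Σⱼ (Aⱼ - λⱼ) ⊗ γⱼ equals the smallest singular value of Σⱼ (Aⱼ - λⱼ) ⊗ eⱼ, where e₁,…,e_d are the universal Clifford generators in Cℓ(d); in particular the Clifford spectrum does not depend on the choice of nontrivial representation. -/

import Mathlib

open scoped Kronecker Matrix

/-! ### Auxiliary lemmas on words in Clifford generators -/

/-- Moving a Clifford generator through a word. -/
lemma clifford_comm {d r : ℕ} (γ : Fin d → Matrix (Fin r) (Fin r) ℂ)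
    (hanti : ∀ j k, j ≠ k → γ j * γ k = -(γ k * γ j))
    (a : Fin d) (u : List (Fin d)) :
    γ a * (u.map γ).prod =
      ((-1 : ℂ) ^ (u.length - u.count a)) • ((u.map γ).prod * γ a) := by
  induction u with
  | nil => simp
  | cons b w ih =>
    simp only [List.map_cons, List.prod_cons, List.count_cons, List.length_cons]
    by_cases hb : b = a
    · subst hb
      have hexp : w.length + 1 - (w.count b + if (b == b) = true then 1 else 0) =
          w.length - w.count b := by simp
      rw [hexp]
      conv_lhs => rw [ih]
      rw [mul_smul_comm, mul_assoc]
    · have hexp : w.length + 1 - (w.count a + if (b == a) = true then 1 else 0) =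
          (w.length - w.count a) + 1 := by
        have hc : w.count a ≤ w.length := List.count_le_length
        rw [if_neg (by simpa using hb)]
        omega
      rw [hexp]
      calc γ a * (γ b * (w.map γ).prod) = (γ a * γ b) * (w.map γ).prod := by
            rw [mul_assoc]
        _ = -(γ b * (γ a * (w.map γ).prod)) := by
            rw [hanti a b (fun h => hb h.symm), neg_mul, mul_assoc]
        _ = ((-1 : ℂ) ^ (w.length - w.count a + 1)) • ((γ b * (w.map γ).prod) * γ a) := by
            rw [ih, mul_smul_comm, mul_assoc, pow_succ, mul_neg_one, neg_smul]

lemma clifford_trace_zero {d r : ℕ} (γ : Fin d → Matrix (Fin r) (Fin r) ℂ)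
    (hanti : ∀ j k, j ≠ k → γ j * γ k = -(γ k * γ j))
    (a : Fin d) (t : List (Fin d)) (ha : a ∉ t) (hodd : Odd t.length) :
    (((a :: t).map γ).prod).trace = 0 := by
  have h := clifford_comm γ hanti a t
  rw [List.count_eq_zero_of_not_mem ha, Nat.sub_zero, Odd.neg_one_pow hodd, neg_one_smul] at h
  have h2 : (γ a * (t.map γ).prod).trace = -(γ a * (t.map γ).prod).trace := by
    nth_rewrite 1 [h]
    rw [Matrix.trace_neg, Matrix.trace_mul_comm]
  simp only [List.map_cons, List.prod_cons]
  have := eq_neg_iff_add_eq_zero.mp h2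
  have h3 : (2:ℂ) * (γ a * (t.map γ).prod).trace = 0 := by ring_nf; linear_combination this
  simpa using h3

/-- Reduction of a word starting with `a` and containing another `a`. -/
lemma clifford_word_reduce {d r : ℕ} (γ : Fin d → Matrix (Fin r) (Fin r) ℂ)
    (hsq : ∀ j, γ j * γ j = 1)
    (hanti : ∀ j k, j ≠ k → γ j * γ k = -(γ k * γ j))
    (a : Fin d) (u v : List (Fin d)) :
    (((a :: (u ++ a :: v)).map γ).prod) =
      ((-1 : ℂ) ^ (u.length - u.count a)) • (((u ++ v).map γ).prod) := by
  have h := clifford_comm γ hanti a u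
  simp only [List.map_cons, List.prod_cons, List.map_append, List.prod_append]
  rw [← mul_assoc, h, smul_mul_assoc]
  congr 1
  rw [mul_assoc, ← mul_assoc (γ a), hsq, one_mul]

/-- Normalized traces of even words in Clifford generators are independent of the
representation. -/
lemma clifford_trace_word {d r r' : ℕ}
    (γ : Fin d → Matrix (Fin r) (Fin r) ℂ)
    (hsq : ∀ j, γ j * γ j = 1)
    (hanti : ∀ j k, j ≠ k → γ j * γ k = -(γ k * γ j))
    (γ' : Fin d → Matrix (Fin r') (Fin r') ℂ)
    (hsq' : ∀ j, γ' j * γ' j = 1)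
    (hanti' : ∀ j k, j ≠ k → γ' j * γ' k = -(γ' k * γ' j))
    (l : List (Fin d)) (hl : Even l.length) :
    (r' : ℂ) * ((l.map γ).prod).trace = (r : ℂ) * ((l.map γ').prod).trace := by
  suffices H : ∀ n (l : List (Fin d)), l.length = n → Even l.length →
      (r' : ℂ) * ((l.map γ).prod).trace = (r : ℂ) * ((l.map γ').prod).trace by
    exact H _ l rfl hl
  intro n
  induction n using Nat.strong_induction_on with
  | _ n ih =>
  rintro (_ | ⟨a, t⟩) hn hl
  · simp [Matrix.trace_one]; ring
  · by_cases ha : a ∈ t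
    · obtain ⟨u, v, rfl⟩ := List.append_of_mem ha
      rw [clifford_word_reduce γ hsq hanti a u v, clifford_word_reduce γ' hsq' hanti' a u v,
        Matrix.trace_smul, Matrix.trace_smul, smul_eq_mul, smul_eq_mul,
        mul_left_comm ((r':ℂ)), mul_left_comm ((r:ℂ))]
      congr 1
      have h2 : 2 ≤ n := by
        simp only [List.length_cons, List.length_append] at hn; omega
      have hlen : (u ++ v).length = n - 2 := by
        simp only [List.length_cons, List.length_append] at hn ⊢
        omega
      have heven : Even (u ++ v).length := by
        simp only [List.length_cons, List.length_append] at hl ⊢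
        rcases hl with ⟨k, hk⟩
        exact ⟨k - 1, by omega⟩
      exact ih (n - 2) (by omega) (u ++ v) hlen heven
    · have hodd : Odd t.length := by
        simp only [List.length_cons] at hl
        rcases hl with ⟨k, hk⟩
        exact ⟨k - 1, by omega⟩
      rw [clifford_trace_zero γ hanti a t ha hodd, clifford_trace_zero γ' hanti' a t ha hodd]
      ring

/-! ### Expansion of powers -/

lemma kron_list_prod {n r d : ℕ} (B : Fin d → Matrix (Fin n) (Fin n) ℂ)
    (γ : Fin d → Matrix (Fin r) (Fin r) ℂ) (l : List (Fin d)) :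
    (l.map (fun j => B j ⊗ₖ γ j)).prod = (l.map B).prod ⊗ₖ (l.map γ).prod := by
  induction l with
  | nil => simp [Matrix.one_kronecker_one]
  | cons a t ih => simp [ih, Matrix.mul_kronecker_mul]

lemma sum_pow_expand {R : Type*} [Semiring R] {ι : Type*} [Fintype ι] [DecidableEq ι]
    (x : ι → R) (N : ℕ) :
    (∑ j, x j) ^ N = ∑ f : Fin N → ι, ((List.ofFn f).map x).prod := by
  induction N with
  | zero => simp
  | succ N ih =>
    rw [pow_succ', ih, Finset.mul_sum]
    simp_rw [Finset.sum_mul]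
    rw [Finset.sum_comm, ← Equiv.sum_comp (Fin.consEquiv (fun _ => ι)), Fintype.sum_prod_type]
    apply Finset.sum_congr rfl
    intro j _
    apply Finset.sum_congr rfl
    intro f _
    simp [Fin.consEquiv, List.ofFn_succ, Fin.cons_zero, Fin.cons_succ]

/-- Normalized even moments of `∑ Bⱼ ⊗ γⱼ` do not depend on the Clifford representation. -/
lemma clifford_moments {d n r r' : ℕ}
    (B : Fin d → Matrix (Fin n) (Fin n) ℂ)
    (γ : Fin d → Matrix (Fin r) (Fin r) ℂ)
    (hsq : ∀ j, γ j * γ j = 1)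
    (hanti : ∀ j k, j ≠ k → γ j * γ k = -(γ k * γ j))
    (γ' : Fin d → Matrix (Fin r') (Fin r') ℂ)
    (hsq' : ∀ j, γ' j * γ' j = 1)
    (hanti' : ∀ j k, j ≠ k → γ' j * γ' k = -(γ' k * γ' j))
    (m : ℕ) :
    (r' : ℂ) * ((∑ j, B j ⊗ₖ γ j) ^ (2 * m)).trace =
      (r : ℂ) * ((∑ j, B j ⊗ₖ γ' j) ^ (2 * m)).trace := by
  rw [sum_pow_expand (fun j => B j ⊗ₖ γ j) (2 * m),
      sum_pow_expand (fun j => B j ⊗ₖ γ' j) (2 * m),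
      Matrix.trace_sum, Matrix.trace_sum, Finset.mul_sum, Finset.mul_sum]
  apply Finset.sum_congr rfl
  intro f _
  rw [kron_list_prod, kron_list_prod, Matrix.trace_kronecker, Matrix.trace_kronecker,
    mul_left_comm, mul_left_comm ((r : ℂ))]
  congr 1
  exact clifford_trace_word γ hsq hanti γ' hsq' hanti' (List.ofFn f)
    (by simp [List.length_ofFn, even_two_mul])

/-! ### Traces of powers of Hermitian matrices -/

lemma trace_pow_hermitian {ι : Type*} [Fintype ι] [DecidableEq ι]
    {M : Matrix ι ι ℂ} (hM : M.IsHermitian) (N : ℕ) :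
    (M ^ N).trace = ∑ i, ((hM.eigenvalues i : ℂ)) ^ N := by
  set U : Matrix ι ι ℂ := (Matrix.IsHermitian.eigenvectorUnitary hM : Matrix ι ι ℂ)
  have hU1 : star U * U = 1 :=
    Matrix.mem_unitaryGroup_iff'.mp (Matrix.IsHermitian.eigenvectorUnitary hM).2
  have hU2 : U * star U = 1 :=
    Matrix.mem_unitaryGroup_iff.mp (Matrix.IsHermitian.eigenvectorUnitary hM).2
  set D : Matrix ι ι ℂ := Matrix.diagonal (RCLike.ofReal ∘ hM.eigenvalues)
  have key : ∀ k : ℕ, M ^ k = U * D ^ k * star U := by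
    intro k
    induction k with
    | zero => simp [hU2]
    | succ k ih =>
      rw [pow_succ, ih, Matrix.IsHermitian.spectral_theorem hM, Unitary.conjStarAlgAut_apply]
      have h1 : U * D ^ k * star U * (U * D * star U)
          = U * (D ^ k * (star U * U) * D) * star U := by noncomm_ring
      rw [h1, hU1, pow_succ]
      noncomm_ring
  rw [key N, Matrix.trace_mul_cycle, hU1, one_mul, Matrix.diagonal_pow,
    Matrix.trace_diagonal]
  simp

/-! ### Equality of value sets from equality of moments -/

open Polynomial in
lemma moment_poly {ι κ : Type*} [Fintype ι] [Fintype κ] (lam : ι → ℝ) (mu : κ → ℝ)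
    (c1 c2 : ℝ)
    (h : ∀ m : ℕ, c2 * ∑ i, lam i ^ m = c1 * ∑ k, mu k ^ m) (p : ℝ[X]) :
    c2 * ∑ i, p.eval (lam i) = c1 * ∑ k, p.eval (mu k) := by
  induction p using Polynomial.induction_on' with
  | add p q hp hq =>
    simp only [Polynomial.eval_add, Finset.sum_add_distrib, mul_add, hp, hq]
  | monomial m c =>
    simp only [Polynomial.eval_monomial]
    rw [← Finset.mul_sum, ← Finset.mul_sum]
    linear_combination c * h m

lemma image_subset_of_moments {ι κ : Type*} [Fintype ι] [Fintype κ] (lam : ι → ℝ) (mu : κ → ℝ)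
    (c1 c2 : ℝ) (ha : 0 < c1) (hb : 0 < c2)
    (h : ∀ m : ℕ, c2 * ∑ i, lam i ^ m = c1 * ∑ k, mu k ^ m) :
    Finset.image lam Finset.univ ⊆ Finset.image mu Finset.univ := by
  classical
  intro x hx
  set F : Finset ℝ := Finset.image lam Finset.univ ∪ Finset.image mu Finset.univ with hF
  set q : Polynomial ℝ := ∏ z ∈ F.erase x, (Polynomial.X - Polynomial.C z) with hq
  have hqx : q.eval x ≠ 0 := by
    rw [hq, Polynomial.eval_prod]
    apply Finset.prod_ne_zero_iff.mpr
    intro z hz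
    simp only [Polynomial.eval_sub, Polynomial.eval_X, Polynomial.eval_C, sub_ne_zero]
    exact fun hxz => (Finset.mem_erase.mp hz).1 hxz.symm
  have hvanish : ∀ y ∈ F, y ≠ x → q.eval y = 0 := by
    intro y hy hyx
    rw [hq, Polynomial.eval_prod]
    apply Finset.prod_eq_zero (Finset.mem_erase.mpr ⟨hyx, hy⟩)
    simp
  have key := moment_poly lam mu c1 c2 h q
  have hlam : ∑ i, q.eval (lam i) =
      ((Finset.univ.filter (fun i => lam i = x)).card : ℝ) * q.eval x := by
    have hterm : ∀ i : ι, q.eval (lam i) = if lam i = x then q.eval x else 0 := by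
      intro i
      by_cases hix : lam i = x
      · rw [if_pos hix, hix]
      · rw [if_neg hix]
        exact hvanish (lam i)
          (Finset.mem_union_left _ (Finset.mem_image_of_mem _ (Finset.mem_univ i))) hix
    rw [Finset.sum_congr rfl (fun i _ => hterm i), Finset.sum_ite, Finset.sum_const,
      Finset.sum_const_zero, add_zero, nsmul_eq_mul]
  have hmu : ∑ k, q.eval (mu k) =
      ((Finset.univ.filter (fun k => mu k = x)).card : ℝ) * q.eval x := by
    have hterm : ∀ k : κ, q.eval (mu k) = if mu k = x then q.eval x else 0 := by
      intro k
      by_cases hkx : mu k = x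
      · rw [if_pos hkx, hkx]
      · rw [if_neg hkx]
        exact hvanish (mu k)
          (Finset.mem_union_right _ (Finset.mem_image_of_mem _ (Finset.mem_univ k))) hkx
    rw [Finset.sum_congr rfl (fun k _ => hterm k), Finset.sum_ite, Finset.sum_const,
      Finset.sum_const_zero, add_zero, nsmul_eq_mul]
  rw [hlam, hmu] at key
  have hcl : 0 < (Finset.univ.filter (fun i => lam i = x)).card := by
    obtain ⟨i, -, hi⟩ := Finset.mem_image.mp hx
    exact Finset.card_pos.mpr ⟨i, Finset.mem_filter.mpr ⟨Finset.mem_univ i, hi⟩⟩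
  have hcm : (Finset.univ.filter (fun k => mu k = x)).card ≠ 0 := by
    intro h0
    rw [h0] at key
    push_cast at key
    rw [zero_mul, mul_zero] at key
    have hclR : ((Finset.univ.filter (fun i => lam i = x)).card : ℝ) ≠ 0 :=
      (Nat.cast_pos.mpr hcl).ne'
    exact (mul_ne_zero hb.ne' (mul_ne_zero hclR hqx)) key
  obtain ⟨k, hk⟩ := Finset.card_pos.mp (Nat.pos_of_ne_zero hcm)
  exact Finset.mem_image.mpr ⟨k, Finset.mem_univ k, (Finset.mem_filter.mp hk).2⟩

lemma image_eq_of_moments {ι κ : Type*} [Fintype ι] [Fintype κ] (lam : ι → ℝ) (mu : κ → ℝ)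
    (c1 c2 : ℝ) (ha : 0 < c1) (hb : 0 < c2)
    (h : ∀ m : ℕ, c2 * ∑ i, lam i ^ m = c1 * ∑ k, mu k ^ m) :
    Finset.image lam Finset.univ = Finset.image mu Finset.univ :=
  le_antisymm (image_subset_of_moments lam mu c1 c2 ha hb h)
    (image_subset_of_moments mu lam c2 c1 hb ha (fun m => by linarith [h m]))

/-! ### `smin` of a Hermitian matrix -/

/-- Smallest singular value of a complex matrix. -/
noncomputable def smin {ι : Type*} [Fintype ι] [DecidableEq ι]
    (M : Matrix ι ι ℂ) : ℝ :=
  sInf ((fun x : EuclideanSpace ℂ ι => ‖Matrix.toEuclideanLin M x‖) '' Metric.sphere 0 1)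

lemma smin_empty {ι : Type*} [Fintype ι] [DecidableEq ι] [IsEmpty ι]
    (M : Matrix ι ι ℂ) : smin M = 0 := by
  have : (Metric.sphere (0 : EuclideanSpace ℂ ι) 1) = ∅ := by
    ext x
    simp only [Metric.mem_sphere, Set.mem_empty_iff_false, iff_false]
    have hx : x = 0 := Subsingleton.elim x 0
    simp [hx]
  rw [smin, this]
  simp [Real.sInf_empty]

section herm
variable {ι : Type*} [Fintype ι] [DecidableEq ι]
  {M : Matrix ι ι ℂ} (hM : M.IsHermitian)

lemma toEuclideanLin_eigenvector (j : ι) :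
    Matrix.toEuclideanLin M (hM.eigenvectorBasis j) =
      (hM.eigenvalues j : ℂ) • hM.eigenvectorBasis j := by
  ext i
  have h := congrFun (hM.mulVec_eigenvectorBasis j) i
  simpa [Matrix.toEuclideanLin_apply, Pi.smul_apply, Complex.real_smul] using h

lemma repr_toEuclideanLin (x : EuclideanSpace ℂ ι) (i : ι) :
    hM.eigenvectorBasis.repr (Matrix.toEuclideanLin M x) i =
      (hM.eigenvalues i : ℂ) * hM.eigenvectorBasis.repr x i := by
  set b := hM.eigenvectorBasis
  have hx : Matrix.toEuclideanLin M x
      = ∑ j, (b.repr x j * (hM.eigenvalues j : ℂ)) • b j := by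
    conv_lhs => rw [← b.sum_repr x]
    rw [map_sum]
    simp_rw [LinearMap.map_smul, b, toEuclideanLin_eigenvector hM, smul_smul]
  rw [hx, map_sum]
  simp_rw [map_smul, OrthonormalBasis.repr_self]
  have : (∑ j, (b.repr x j * (hM.eigenvalues j : ℂ)) • EuclideanSpace.single j (1:ℂ)) i
      = ∑ j, ((b.repr x j * (hM.eigenvalues j : ℂ)) • EuclideanSpace.single j (1:ℂ)) i := by
    rw [WithLp.ofLp_sum]; exact Finset.sum_apply i Finset.univ _
  rw [this]
  simp [EuclideanSpace.single_apply, mul_comm]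

lemma norm_sq_toEuclideanLin (x : EuclideanSpace ℂ ι) :
    ‖Matrix.toEuclideanLin M x‖ ^ 2 =
      ∑ i, hM.eigenvalues i ^ 2 * ‖hM.eigenvectorBasis.repr x i‖ ^ 2 := by
  set b := hM.eigenvectorBasis
  rw [← b.repr.norm_map (Matrix.toEuclideanLin M x), EuclideanSpace.norm_eq,
    Real.sq_sqrt (by positivity)]
  apply Finset.sum_congr rfl
  intro i _
  rw [repr_toEuclideanLin hM x i, norm_mul, mul_pow, Complex.norm_real, Real.norm_eq_abs,
    sq_abs]

lemma norm_sq_repr (x : EuclideanSpace ℂ ι) :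
    ‖x‖ ^ 2 = ∑ i, ‖hM.eigenvectorBasis.repr x i‖ ^ 2 := by
  rw [← hM.eigenvectorBasis.repr.norm_map x, EuclideanSpace.norm_eq,
    Real.sq_sqrt (by positivity)]

lemma smin_hermitian [Nonempty ι] :
    smin M = Real.sqrt ((Finset.univ.image (fun i => hM.eigenvalues i ^ 2)).min'
      (Finset.univ_nonempty.image _)) := by
  classical
  set s := Finset.univ.image (fun i => hM.eigenvalues i ^ 2) with hs
  set m := s.min' (Finset.univ_nonempty.image _) with hm
  have hm0 : 0 ≤ m := by
    have := s.min'_mem (Finset.univ_nonempty.image _)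
    rw [← hm] at this
    obtain ⟨i, -, hi⟩ := Finset.mem_image.mp this
    rw [← hi]; positivity
  have hmmem : m ∈ Finset.image (fun i => hM.eigenvalues i ^ 2) Finset.univ :=
    s.min'_mem _
  obtain ⟨i₀, -, hi₀⟩ := Finset.mem_image.mp hmmem
  apply le_antisymm
  · apply csInf_le
    · exact ⟨0, fun y hy => by
        obtain ⟨x, -, rfl⟩ := hy
        positivity⟩
    · refine ⟨hM.eigenvectorBasis i₀, ?_, ?_⟩
      · simp [mem_sphere_iff_norm, hM.eigenvectorBasis.orthonormal.1 i₀]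
      · show ‖Matrix.toEuclideanLin M (hM.eigenvectorBasis i₀)‖ = _
        rw [toEuclideanLin_eigenvector hM i₀, norm_smul, Complex.norm_real,
          Real.norm_eq_abs, hM.eigenvectorBasis.orthonormal.1 i₀, mul_one,
          ← Real.sqrt_sq_eq_abs, hi₀]
  · apply le_csInf
    · exact ⟨_, ⟨hM.eigenvectorBasis i₀, by
        simp [mem_sphere_iff_norm, hM.eigenvectorBasis.orthonormal.1 i₀], rfl⟩⟩
    · rintro y ⟨x, hx, rfl⟩
      have hx1 : ‖x‖ = 1 := by simpa [mem_sphere_iff_norm] using hx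
      have hrepr : ∑ i, ‖hM.eigenvectorBasis.repr x i‖ ^ 2 = 1 := by
        rw [← norm_sq_repr hM x, hx1, one_pow]
      have hge : m ≤ ‖Matrix.toEuclideanLin M x‖ ^ 2 := by
        rw [norm_sq_toEuclideanLin hM x]
        calc m = m * ∑ i, ‖hM.eigenvectorBasis.repr x i‖ ^ 2 := by rw [hrepr, mul_one]
          _ = ∑ i, m * ‖hM.eigenvectorBasis.repr x i‖ ^ 2 := Finset.mul_sum _ _ _
          _ ≤ ∑ i, hM.eigenvalues i ^ 2 * ‖hM.eigenvectorBasis.repr x i‖ ^ 2 := by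
              apply Finset.sum_le_sum
              intro i _
              apply mul_le_mul_of_nonneg_right _ (by positivity)
              exact s.min'_le _ (Finset.mem_image_of_mem _ (Finset.mem_univ i))
      calc Real.sqrt m ≤ Real.sqrt (‖Matrix.toEuclideanLin M x‖ ^ 2) :=
            Real.sqrt_le_sqrt hge
        _ = ‖Matrix.toEuclideanLin M x‖ := Real.sqrt_sq (norm_nonneg _)
end herm

/-! ### Hermitian facts -/

lemma kron_hermitian {n r : ℕ} {X : Matrix (Fin n) (Fin n) ℂ} {Y : Matrix (Fin r) (Fin r) ℂ}
    (hX : X.IsHermitian) (hY : Y.IsHermitian) : (X ⊗ₖ Y).IsHermitian := by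
  ext ⟨i, k⟩ ⟨j, l⟩
  have hx := congrFun (congrFun hX i) j
  have hy := congrFun (congrFun hY k) l
  simp only [Matrix.conjTranspose_apply, Matrix.kroneckerMap_apply] at hx hy ⊢
  rw [star_mul', hx, hy]

lemma isHermitian_sum {ι κ : Type*} [Fintype κ] [DecidableEq κ] (s : Finset ι)
    (f : ι → Matrix κ κ ℂ) (h : ∀ j ∈ s, (f j).IsHermitian) :
    (∑ j ∈ s, f j).IsHermitian := by
  show (∑ j ∈ s, f j)ᴴ = _
  rw [Matrix.conjTranspose_sum]
  exact Finset.sum_congr rfl h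

lemma min'_congr {s t : Finset ℝ} (h : s = t) (hs : s.Nonempty) (ht : t.Nonempty) :
    s.min' hs = t.min' ht := by subst h; rfl

/-! ### Main theorem -/

theorem smin_independent_of_clifford_rep
    {d n r r' : ℕ} (hr : 0 < r) (hr' : 0 < r')
    (A : Fin d → Matrix (Fin n) (Fin n) ℂ) (hA : ∀ j, (A j).IsHermitian)
    (γ : Fin d → Matrix (Fin r) (Fin r) ℂ)
    (hherm : ∀ j, (γ j).IsHermitian)
    (hsq : ∀ j, γ j * γ j = 1)
    (hanti : ∀ j k, j ≠ k → γ j * γ k = -(γ k * γ j))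
    (γ' : Fin d → Matrix (Fin r') (Fin r') ℂ)
    (hherm' : ∀ j, (γ' j).IsHermitian)
    (hsq' : ∀ j, γ' j * γ' j = 1)
    (hanti' : ∀ j k, j ≠ k → γ' j * γ' k = -(γ' k * γ' j))
    (lam : Fin d → ℝ) :
    smin (∑ j, ((A j - (lam j : ℂ) • 1) ⊗ₖ γ j)) =
    smin (∑ j, ((A j - (lam j : ℂ) • 1) ⊗ₖ γ' j)) := by
  rcases Nat.eq_zero_or_pos n with hn | hn
  · subst hn
    haveI : IsEmpty (Fin 0 × Fin r) := by infer_instance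
    haveI : IsEmpty (Fin 0 × Fin r') := by infer_instance
    rw [smin_empty, smin_empty]
  · haveI : Nonempty (Fin n) := ⟨⟨0, hn⟩⟩
    haveI : Nonempty (Fin r) := ⟨⟨0, hr⟩⟩
    haveI : Nonempty (Fin r') := ⟨⟨0, hr'⟩⟩
    set B : Fin d → Matrix (Fin n) (Fin n) ℂ := fun j => A j - (lam j : ℂ) • 1 with hB
    have hBh : ∀ j, (B j).IsHermitian := by
      intro j
      apply (hA j).sub
      show ((lam j : ℂ) • (1 : Matrix (Fin n) (Fin n) ℂ))ᴴ = _
      rw [Matrix.conjTranspose_smul, Matrix.conjTranspose_one, Complex.star_def,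
        Complex.conj_ofReal]
    have hM : (∑ j, B j ⊗ₖ γ j).IsHermitian :=
      isHermitian_sum _ _ (fun j _ => kron_hermitian (hBh j) (hherm j))
    have hM' : (∑ j, B j ⊗ₖ γ' j).IsHermitian :=
      isHermitian_sum _ _ (fun j _ => kron_hermitian (hBh j) (hherm' j))
    have hmomC : ∀ m : ℕ,
        (r' : ℂ) * ∑ i, ((hM.eigenvalues i : ℂ)) ^ (2 * m) =
        (r : ℂ) * ∑ k, ((hM'.eigenvalues k : ℂ)) ^ (2 * m) := by
      intro m
      have h := clifford_moments B γ hsq hanti γ' hsq' hanti' m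
      rwa [trace_pow_hermitian hM, trace_pow_hermitian hM'] at h
    have hmomR : ∀ m : ℕ,
        (r' : ℝ) * ∑ i, (hM.eigenvalues i ^ 2) ^ m =
        (r : ℝ) * ∑ k, (hM'.eigenvalues k ^ 2) ^ m := by
      intro m
      have h := hmomC m
      simp_rw [pow_mul] at h
      exact_mod_cast h
    have himg : Finset.image (fun i => hM.eigenvalues i ^ 2) Finset.univ =
        Finset.image (fun k => hM'.eigenvalues k ^ 2) Finset.univ :=
      image_eq_of_moments _ _ (r : ℝ) (r' : ℝ)
        (by exact_mod_cast hr) (by exact_mod_cast hr') hmomR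
    rw [smin_hermitian hM, smin_hermitian hM']
    congr 1
    exact min'_congr himg _ _
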